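/- Let x_1, …, x_n be nonzero vectors in ℝ^d, and for i, j ∈ [n] let θ_{ij} = arccos(⟨x_i, x_j⟩/(‖x_i‖‖x_j‖)) ∈ [0, π] be the angle between x_i and x_j (so θ_{ii} = 0). Then the n×n matrix M with entries M_{ij} = 1 − θ_{ij}/π is symmetric positive semidefinite. -/

import Mathlib

set_option maxHeartbeats 1000000

noncomputable def bc (k : ℕ) : ℝ := (Nat.centralBinom k : ℝ) / 4 ^ k

lemma bc_nonneg (k : ℕ) : 0 ≤ bc k := by unfold bc; positivity

lemma bc_succ (k : ℕ) : bc (k + 1) = bc k * (2 * k + 1) / (2 * k + 2) := by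
  have h := Nat.succ_mul_centralBinom_succ k
  have h' : ((k:ℝ) + 1) * (Nat.centralBinom (k+1) : ℝ) = 2 * (2 * k + 1) * Nat.centralBinom k := by
    exact_mod_cast congrArg (Nat.cast : ℕ → ℝ) h
  have hk : ((k:ℝ) + 1) ≠ 0 := by positivity
  have h4 : (4:ℝ)^k ≠ 0 := by positivity
  unfold bc
  field_simp [pow_succ]
  rw [pow_succ]; linear_combination (2 * (4:ℝ) ^ k) * h'

lemma bc_le_one (k : ℕ) : bc k ≤ 1 := by
  induction k with
  | zero => simp [bc, Nat.centralBinom]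
  | succ k ih =>
    rw [bc_succ]
    have h1 : (2 * (k:ℝ) + 1) / (2 * k + 2) ≤ 1 := by
      rw [div_le_one (by positivity)]; linarith
    calc bc k * (2 * k + 1) / (2 * k + 2) = bc k * ((2 * k + 1) / (2 * k + 2)) := by ring
    _ ≤ 1 * 1 := mul_le_mul ih h1 (by positivity) zero_le_one
    _ = 1 := by ring

lemma summable_bc_pow {x : ℝ} (hx : |x| < 1) : Summable (fun k => bc k * x ^ k) := by
  refine Summable.of_norm_bounded (g := fun k => |x| ^ k) (summable_geometric_of_lt_one (abs_nonneg x) hx) ?_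
  intro k
  rw [norm_mul, norm_pow]
  calc ‖bc k‖ * |x| ^ k ≤ 1 * |x| ^ k := by
        apply mul_le_mul_of_nonneg_right _ (by positivity)
        rw [Real.norm_eq_abs, abs_of_nonneg (bc_nonneg k)]; exact bc_le_one k
  _ = |x| ^ k := one_mul _

noncomputable def gfun (x : ℝ) : ℝ := ∑' k, bc k * x ^ k

lemma summable_dbc {x : ℝ} (hx : |x| < 1) : Summable (fun k => bc k * ((k:ℝ) * x ^ (k-1))) := by
  refine Summable.of_norm_bounded (g := fun k => (k:ℝ) * |x| ^ (k-1)) ?_ ?_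
  · have h0 := summable_pow_mul_geometric_of_norm_lt_one (R := ℝ) (r := |x|) 1
      (by rw [Real.norm_eq_abs, abs_abs]; exact hx)
    have h1 : Summable (fun n : ℕ => ((n:ℝ)+1) * |x|^n) :=
      (h0.add (summable_geometric_of_lt_one (abs_nonneg x) hx)).congr (fun n => by ring)
    have h2 : Summable (fun n : ℕ => (((n+1:ℕ)):ℝ) * |x| ^ ((n+1) - 1)) :=
      h1.congr (fun n => by push_cast [Nat.add_sub_cancel]; ring)
    exact (summable_nat_add_iff (f := fun k : ℕ => (k:ℝ) * |x| ^ (k-1)) 1).1 h2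
  · intro k
    rw [norm_mul, norm_mul, norm_pow, Real.norm_eq_abs (bc k), abs_of_nonneg (bc_nonneg k),
      Real.norm_natCast]
    calc bc k * ((k:ℝ) * |x| ^ (k-1)) ≤ 1 * ((k:ℝ) * |x| ^ (k-1)) :=
      mul_le_mul_of_nonneg_right (bc_le_one k) (by positivity)
    _ = (k:ℝ) * |x| ^ (k-1) := one_mul _

lemma hasDerivAt_gfun {x : ℝ} (hx : |x| < 1) :
    HasDerivAt gfun (∑' k, bc k * ((k:ℝ) * x ^ (k-1))) x := by
  set r : ℝ := (1 + |x|) / 2 with hr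
  have hr0 : 0 < r := by positivity
  have hxr : |x| < r := by rw [hr]; linarith
  have hr1 : r < 1 := by rw [hr]; linarith
  have hrabs : |r| < 1 := by rwa [abs_of_pos hr0]
  refine hasDerivAt_tsum_of_isPreconnected (F := ℝ) (u := fun k => bc k * ((k:ℝ) * r ^ (k-1)))
    (summable_dbc hrabs) (Metric.isOpen_ball (x := (0:ℝ)) (ε := r))
    ((convex_ball (0:ℝ) r).isPreconnected) (g := fun k y => bc k * y ^ k)
    (g' := fun k y => bc k * ((k:ℝ) * y ^ (k-1))) (y₀ := 0) ?_ ?_ ?_ ?_ ?_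
  · intro k y _
    exact (hasDerivAt_pow k y).const_mul (bc k)
  · intro k y hy
    rw [Metric.mem_ball, dist_zero_right, Real.norm_eq_abs] at hy
    rw [Real.norm_eq_abs, abs_mul, abs_mul, abs_of_nonneg (bc_nonneg k), Nat.abs_cast, abs_pow]
    apply mul_le_mul_of_nonneg_left _ (bc_nonneg k)
    apply mul_le_mul_of_nonneg_left _ (Nat.cast_nonneg k)
    exact pow_le_pow_left₀ (abs_nonneg y) (le_of_lt hy) _
  · rw [Metric.mem_ball, dist_zero_right, Real.norm_eq_abs]; rwa [abs_zero]
  · exact summable_bc_pow (by rw [abs_zero]; norm_num)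
  · rwa [Metric.mem_ball, dist_zero_right, Real.norm_eq_abs]

lemma hasSum_dgfun {x : ℝ} (hx : |x| < 1) :
    HasSum (fun k : ℕ => ((k:ℝ) + 1) * bc (k+1) * x ^ k)
      (∑' k, bc k * ((k:ℝ) * x ^ (k-1))) := by
  have hs := (summable_dbc hx).hasSum
  have h2 := (hasSum_nat_add_iff' (f := fun k => bc k * ((k:ℝ) * x ^ (k-1))) 1).2 hs
  simp only [Finset.range_one, Finset.sum_singleton, Nat.cast_zero] at h2
  norm_num at h2
  exact h2.congr_fun (fun n => by push_cast [Nat.add_sub_cancel]; ring)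

lemma gfun_ode {x : ℝ} (hx : |x| < 1) :
    (∑' k, bc k * ((k:ℝ) * x ^ (k-1))) - x * (∑' k, bc k * ((k:ℝ) * x ^ (k-1)))
      = gfun x / 2 := by
  set D := ∑' k, bc k * ((k:ℝ) * x ^ (k-1)) with hD
  have S1 := hasSum_dgfun hx
  have S2 := S1.mul_left x
  have S2' : HasSum (fun k : ℕ => (k:ℝ) * bc k * x ^ k) (x * D) := by
    refine (hasSum_nat_add_iff' (f := fun k : ℕ => (k:ℝ) * bc k * x ^ k) 1).1 ?_
    simp only [Finset.range_one, Finset.sum_singleton, Nat.cast_zero, zero_mul, sub_zero]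
    exact S2.congr_fun (fun n => by push_cast; ring)
  have S3 := S1.sub S2'
  have S4 : HasSum (fun k : ℕ => bc k / 2 * x ^ k) (D - x * D) := by
    refine S3.congr_fun (fun k => ?_)
    have hb : ((k:ℝ)+1) * bc (k+1) = bc k * (2*k+1) / 2 := by
      rw [bc_succ]
      have : (2*(k:ℝ)+2) ≠ 0 := by positivity
      field_simp
    rw [hb]; ring
  have S5 : HasSum (fun k : ℕ => bc k / 2 * x ^ k) (gfun x / 2) :=
    ((summable_bc_pow hx).hasSum.div_const 2).congr_fun (fun k => by ring)
  exact S4.unique S5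

lemma gfun_zero : gfun 0 = 1 := by
  rw [gfun, tsum_eq_single 0 (fun b hb => by simp [zero_pow hb])]
  simp [bc, Nat.centralBinom]

lemma gfun_eq {x : ℝ} (hx : x ∈ Set.Ioo (-1:ℝ) 1) : gfun x = 1 / Real.sqrt (1 - x) := by
  have hder : ∀ y ∈ Set.Ioo (-1:ℝ) 1,
      HasDerivAt (fun y => gfun y * Real.sqrt (1 - y)) 0 y := by
    intro y hy
    have hy1 : (0:ℝ) < 1 - y := by linarith [hy.2]
    have habs : |y| < 1 := abs_lt.2 ⟨hy.1, hy.2⟩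
    have hsq : 0 < Real.sqrt (1 - y) := Real.sqrt_pos.2 hy1
    have hsqsq : Real.sqrt (1 - y) * Real.sqrt (1 - y) = 1 - y := Real.mul_self_sqrt hy1.le
    have hd2 : HasDerivAt (fun y : ℝ => Real.sqrt (1 - y))
        (1 / (2 * Real.sqrt (1 - y)) * (-1)) y := by
      have hinner : HasDerivAt (fun y : ℝ => 1 - y) (-1) y := by
        simpa using (hasDerivAt_id y).const_sub 1
      exact (Real.hasDerivAt_sqrt hy1.ne').comp y hinner
    have hmul := (hasDerivAt_gfun habs).mul hd2
    have hode := gfun_ode habs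
    have hval : (∑' k, bc k * ((k:ℝ) * y ^ (k-1))) * Real.sqrt (1 - y)
        + gfun y * (1 / (2 * Real.sqrt (1 - y)) * (-1)) = 0 := by
      set S := (∑' k, bc k * ((k:ℝ) * y ^ (k-1))) with hS
      field_simp
      linear_combination (2 * S) * hsqsq + 2 * hode
    rwa [hval] at hmul
  have hconst := (convex_Ioo (-1:ℝ) 1).is_const_of_fderivWithin_eq_zero (𝕜 := ℝ)
    (f := fun y => gfun y * Real.sqrt (1 - y))
    (fun y hy => ((hder y hy).differentiableAt).differentiableWithinAt)
    (fun y hy => by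
      rw [fderivWithin_of_isOpen isOpen_Ioo hy, (hder y hy).hasFDerivAt.fderiv]
      ext z; simp)
    hx (by constructor <;> norm_num : (0:ℝ) ∈ Set.Ioo (-1:ℝ) 1)
  have h1 : gfun x * Real.sqrt (1 - x) = 1 := by
    simpa [gfun_zero] using hconst
  have hsq : 0 < Real.sqrt (1 - x) := Real.sqrt_pos.2 (by linarith [hx.2])
  rw [eq_div_iff hsq.ne']
  exact h1

lemma summable_arc {y : ℝ} (hy : |y| < 1) :
    Summable (fun k : ℕ => bc k / (2*(k:ℝ)+1) * y ^ (2*k+1)) := by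
  have hy2 : |y|^2 < 1 := by nlinarith [abs_nonneg y]
  refine Summable.of_norm_bounded (g := fun k => (|y|^2) ^ k * |y|)
    ((summable_geometric_of_lt_one (by positivity) hy2).mul_right _) ?_
  intro k
  rw [norm_mul, norm_pow, Real.norm_eq_abs, Real.norm_eq_abs]
  show |bc k / (2*(k:ℝ)+1)| * |y| ^ (2*k+1) ≤ (|y|^2) ^ k * |y|
  have h1 : |bc k / (2*(k:ℝ)+1)| ≤ 1 := by
    rw [abs_of_nonneg (div_nonneg (bc_nonneg k) (by positivity))]
    rw [div_le_one (by positivity)]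
    calc bc k ≤ 1 := bc_le_one k
    _ ≤ 2*(k:ℝ)+1 := by linarith [Nat.cast_nonneg (α := ℝ) k]
  calc |bc k / (2*(k:ℝ)+1)| * |y| ^ (2*k+1) ≤ 1 * |y| ^ (2*k+1) :=
        mul_le_mul_of_nonneg_right h1 (by positivity)
  _ = (|y|^2) ^ k * |y| := by rw [one_mul, pow_succ, pow_mul]

noncomputable def Ffun (z : ℝ) : ℝ := ∑' k : ℕ, bc k / (2*(k:ℝ)+1) * z ^ (2*k+1)

lemma hasDerivAt_Ffun {z : ℝ} (hz : |z| < 1) : HasDerivAt Ffun (gfun (z^2)) z := by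
  set r : ℝ := (1 + |z|) / 2 with hr
  have hr0 : 0 < r := by positivity
  have hzr : |z| < r := by rw [hr]; linarith
  have hr1 : r < 1 := by rw [hr]; linarith
  have hr2 : |r^2| < 1 := by rw [abs_of_nonneg (by positivity)]; nlinarith
  have key : HasDerivAt (fun w => ∑' k : ℕ, bc k / (2*(k:ℝ)+1) * w ^ (2*k+1))
      (∑' k : ℕ, bc k * z ^ (2*k)) z := by
    refine hasDerivAt_tsum_of_isPreconnected (F := ℝ) (u := fun k => bc k * r ^ (2*k))
      ((summable_bc_pow hr2).congr (fun k => by rw [← pow_mul]))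
      (Metric.isOpen_ball (x := (0:ℝ)) (ε := r))
      ((convex_ball (0:ℝ) r).isPreconnected)
      (g := fun k w => bc k / (2*(k:ℝ)+1) * w ^ (2*k+1))
      (g' := fun k w => bc k * w ^ (2*k)) (y₀ := 0) ?_ ?_ ?_ ?_ ?_
    · intro k w _
      have h := (hasDerivAt_pow (2*k+1) w).const_mul (bc k / (2*(k:ℝ)+1))
      refine h.congr_deriv ?_
      have : ((2*k+1 : ℕ):ℝ) = 2*(k:ℝ)+1 := by push_cast; ring
      rw [Nat.add_sub_cancel, this]
      field_simp
    · intro k w hw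
      rw [Metric.mem_ball, dist_zero_right, Real.norm_eq_abs] at hw
      rw [Real.norm_eq_abs, abs_mul, abs_of_nonneg (bc_nonneg k), abs_pow]
      exact mul_le_mul_of_nonneg_left
        (pow_le_pow_left₀ (abs_nonneg w) hw.le _) (bc_nonneg k)
    · rw [Metric.mem_ball, dist_zero_right, Real.norm_eq_abs, abs_zero]; exact hr0
    · exact summable_arc (by rw [abs_zero]; norm_num)
    · rwa [Metric.mem_ball, dist_zero_right, Real.norm_eq_abs]
  have heq : (∑' k : ℕ, bc k * z ^ (2*k)) = gfun (z^2) := by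
    rw [gfun]
    exact tsum_congr (fun k => by rw [pow_mul])
  rw [heq] at key
  exact key

lemma Ffun_zero : Ffun 0 = 0 := by
  rw [Ffun]
  have : ∀ k : ℕ, bc k / (2*(k:ℝ)+1) * (0:ℝ) ^ (2*k+1) = 0 := by
    intro k; rw [zero_pow (by omega)]; ring
  rw [tsum_congr this, tsum_zero]

lemma Ffun_eq_arcsin {y : ℝ} (hy : |y| < 1) : Ffun y = Real.arcsin y := by
  have hder : ∀ z ∈ Set.Ioo (-1:ℝ) 1,
      HasDerivAt (fun z => Ffun z - Real.arcsin z) 0 z := by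
    intro z hz
    have habs : |z| < 1 := abs_lt.2 ⟨hz.1, hz.2⟩
    have h1 := hasDerivAt_Ffun habs
    have h2 := Real.hasDerivAt_arcsin (ne_of_gt hz.1) (ne_of_lt hz.2)
    have h3 : gfun (z^2) = 1 / Real.sqrt (1 - z^2) := by
      apply gfun_eq
      constructor
      · nlinarith [sq_nonneg z]
      · nlinarith [habs, abs_nonneg z, sq_abs z]
    have := h1.sub h2
    rwa [h3, sub_self] at this
  have hconst := (convex_Ioo (-1:ℝ) 1).is_const_of_fderivWithin_eq_zero (𝕜 := ℝ)
    (f := fun z => Ffun z - Real.arcsin z)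
    (fun z hz => ((hder z hz).differentiableAt).differentiableWithinAt)
    (fun z hz => by
      rw [fderivWithin_of_isOpen isOpen_Ioo hz, (hder z hz).hasFDerivAt.fderiv]
      ext; simp)
    (abs_lt.1 hy |> fun h => ⟨h.1, h.2⟩) (by constructor <;> norm_num : (0:ℝ) ∈ Set.Ioo (-1:ℝ) 1)
  have : Ffun y - Real.arcsin y = 0 := by
    simpa [Ffun_zero, Real.arcsin_zero] using hconst
  linarith

lemma hasSum_arcsin {y : ℝ} (hy : |y| < 1) :
    HasSum (fun k : ℕ => bc k / (2*(k:ℝ)+1) * y ^ (2*k+1)) (Real.arcsin y) := by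
  have := (summable_arc hy).hasSum
  rwa [show (∑' k : ℕ, bc k / (2*(k:ℝ)+1) * y ^ (2*k+1)) = Ffun y from rfl,
    Ffun_eq_arcsin hy] at this

lemma quad_pow_nonneg {n d : ℕ} (u : Fin n → EuclideanSpace ℝ (Fin d)) (c : Fin n → ℝ) (m : ℕ) :
    0 ≤ ∑ i, ∑ j, c i * c j * (inner ℝ (u i) (u j) : ℝ) ^ m := by
  have hinner : ∀ i j : Fin n, (inner ℝ (u i) (u j) : ℝ) ^ m
      = ∑ p : Fin m → Fin d, (∏ t, u i (p t)) * (∏ t, u j (p t)) := by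
    intro i j
    have : (inner ℝ (u i) (u j) : ℝ) = ∑ a, u i a * u j a := by
      rw [PiLp.inner_apply]; simp [RCLike.inner_apply]
      exact Finset.sum_congr rfl (fun _ _ => mul_comm _ _)
    rw [this, Fintype.sum_pow]
    exact Finset.sum_congr rfl (fun p _ => by rw [← Finset.prod_mul_distrib])
  have h1 : ∀ i j : Fin n, c i * c j * (inner ℝ (u i) (u j) : ℝ) ^ m
      = ∑ p : Fin m → Fin d, (c i * ∏ t, u i (p t)) * (c j * ∏ t, u j (p t)) := by
    intro i j
    rw [hinner i j, Finset.mul_sum]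
    exact Finset.sum_congr rfl (fun p _ => by ring)
  have key : ∑ i, ∑ j, c i * c j * (inner ℝ (u i) (u j) : ℝ) ^ m
      = ∑ p : Fin m → Fin d, (∑ i, c i * ∏ t, u i (p t)) ^ 2 := by
    simp_rw [h1]
    rw [show (∑ i, ∑ j, ∑ p : Fin m → Fin d,
        (c i * ∏ t, u i (p t)) * (c j * ∏ t, u j (p t)))
        = ∑ i, ∑ p : Fin m → Fin d, ∑ j,
        (c i * ∏ t, u i (p t)) * (c j * ∏ t, u j (p t)) from
      Finset.sum_congr rfl (fun i _ => Finset.sum_comm), Finset.sum_comm]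
    refine Finset.sum_congr rfl (fun p _ => ?_)
    rw [sq, Finset.sum_mul_sum]
  rw [key]
  exact Finset.sum_nonneg (fun p _ => sq_nonneg _)



/-- Let `x 1, …, x n` be nonzero vectors in `ℝ^d` and for `i, j` let
`θ i j = arccos(⟨x i, x j⟩/(‖x i‖‖x j‖)) ∈ [0, π]` be the angle between `x i` and `x j`.
Then the `n × n` matrix `M` with entries `M i j = 1 − θ i j / π` is symmetric positive
semidefinite. (It is the Gram matrix of the random features `√2·1{⟨w,x⟩ ≥ 0}` arising
from the Gaussian orthant probability of Lemma C.1 of the paper.) -/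
theorem one_sub_angle_div_pi_posSemidef
    {n d : ℕ} (hn : 0 < n) (hd : 0 < d)
    (x : Fin n → EuclideanSpace ℝ (Fin d)) (hx : ∀ i, x i ≠ 0)
    (M : Matrix (Fin n) (Fin n) ℝ)
    (hM : ∀ i j, M i j = 1 - InnerProductGeometry.angle (x i) (x j) / Real.pi) :
    M.IsSymm ∧ M.PosSemidef := by
  -- normalized vectors
  set u : Fin n → EuclideanSpace ℝ (Fin d) := fun i => ‖x i‖⁻¹ • x i with hu
  have hnorm : ∀ i, ‖x i‖ ≠ 0 := fun i => norm_ne_zero_iff.2 (hx i)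
  have hunorm : ∀ i, ‖u i‖ = 1 := by
    intro i
    rw [hu, norm_smul, norm_inv, norm_norm, inv_mul_cancel₀ (hnorm i)]
  set g : Fin n → Fin n → ℝ := fun i j => (inner ℝ (u i) (u j) : ℝ) with hg
  have hgbound : ∀ i j, |g i j| ≤ 1 := by
    intro i j
    have := abs_real_inner_le_norm (u i) (u j)
    rwa [hunorm, hunorm, one_mul] at this
  have hMg : ∀ i j, M i j = 1/2 + Real.arcsin (g i j) / Real.pi := by
    intro i j
    have hginner : g i j = (inner ℝ (x i) (x j) : ℝ) / (‖x i‖ * ‖x j‖) := by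
      rw [hg]
      simp only [hu, real_inner_smul_left, real_inner_smul_right]
      field_simp
    have hangle : InnerProductGeometry.angle (x i) (x j) = Real.arccos (g i j) := by
      rw [hginner]; rfl
    rw [hM, hangle, Real.arccos_eq_pi_div_two_sub_arcsin]
    have hpi := Real.pi_ne_zero
    field_simp
    ring
  -- symmetry
  have hsymm : M.IsSymm := by
    ext i j
    rw [Matrix.transpose_apply, hM, hM, InnerProductGeometry.angle_comm]
  refine ⟨hsymm, Matrix.PosSemidef.of_dotProduct_mulVec_nonneg ?_ ?_⟩
  · -- Hermitian
    ext i j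
    rw [Matrix.conjTranspose_apply, hM, hM, InnerProductGeometry.angle_comm, star_trivial]
  · -- quadratic form
    intro c
    have hquad : dotProduct (star c) (M.mulVec c) = ∑ i, ∑ j, c i * c j * M i j := by
      simp only [dotProduct, Matrix.mulVec, star_trivial, Pi.star_apply]
      exact Finset.sum_congr rfl (fun i _ => by
        rw [Finset.mul_sum]
        exact Finset.sum_congr rfl (fun j _ => by ring))
    -- the arcsin quadratic form is nonnegative
    have harc : 0 ≤ ∑ i, ∑ j, c i * c j * Real.arcsin (g i j) := by
      -- approximate with r < 1
      set φ : ℝ → ℝ := fun r => ∑ i, ∑ j, c i * c j * Real.arcsin (r * g i j) with hφ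
      have hφr : ∀ r : ℝ, 0 < r → r < 1 → 0 ≤ φ r := by
        intro r hr0 hr1
        have habs : ∀ i j, |r * g i j| < 1 := by
          intro i j
          rw [abs_mul, abs_of_pos hr0]
          calc r * |g i j| ≤ r * 1 := mul_le_mul_of_nonneg_left (hgbound i j) hr0.le
          _ < 1 := by linarith
        have hHS : HasSum
            (fun k : ℕ => ∑ q : Fin n × Fin n,
              c q.1 * c q.2 * (bc k / (2*(k:ℝ)+1) * (r * g q.1 q.2) ^ (2*k+1)))
            (∑ q : Fin n × Fin n, c q.1 * c q.2 * Real.arcsin (r * g q.1 q.2)) := by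
          exact hasSum_sum (fun q _ => (hasSum_arcsin (habs q.1 q.2)).mul_left _)
        have hterm : ∀ k : ℕ, 0 ≤ ∑ q : Fin n × Fin n,
            c q.1 * c q.2 * (bc k / (2*(k:ℝ)+1) * (r * g q.1 q.2) ^ (2*k+1)) := by
          intro k
          have : (∑ q : Fin n × Fin n,
              c q.1 * c q.2 * (bc k / (2*(k:ℝ)+1) * (r * g q.1 q.2) ^ (2*k+1)))
              = bc k / (2*(k:ℝ)+1) * r ^ (2*k+1)
                * ∑ i, ∑ j, c i * c j * (g i j) ^ (2*k+1) := by
            rw [Fintype.sum_prod_type, Finset.mul_sum]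
            refine Finset.sum_congr rfl (fun i _ => ?_)
            rw [Finset.mul_sum]
            refine Finset.sum_congr rfl (fun j _ => ?_)
            rw [mul_pow]; ring
          rw [this]
          have h1 : 0 ≤ bc k / (2*(k:ℝ)+1) * r ^ (2*k+1) := by
            apply mul_nonneg (div_nonneg (bc_nonneg k) (by positivity)) (by positivity)
          exact mul_nonneg h1 (quad_pow_nonneg u c (2*k+1))
        have hval : φ r = ∑ q : Fin n × Fin n, c q.1 * c q.2 * Real.arcsin (r * g q.1 q.2) := by
          rw [hφ]
          exact (Fintype.sum_prod_type
            (f := fun q : Fin n × Fin n => c q.1 * c q.2 * Real.arcsin (r * g q.1 q.2))).symm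
        rw [hval, ← hHS.tsum_eq]
        exact tsum_nonneg hterm
      -- continuity and limit r → 1
      have hcont : Continuous φ := by
        apply continuous_finset_sum
        intro i _
        apply continuous_finset_sum
        intro j _
        exact continuous_const.mul (Real.continuous_arcsin.comp (continuous_id.mul continuous_const))
      have hseq : Filter.Tendsto (fun m : ℕ => (1 : ℝ) - 1/((m:ℝ)+2)) Filter.atTop (nhds 1) := by
        have h0 : Filter.Tendsto (fun m : ℕ => 1/((m:ℝ)+2)) Filter.atTop (nhds 0) := by
          simp only [one_div]
          exact Filter.Tendsto.comp tendsto_inv_atTop_zero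
            (Filter.tendsto_atTop_add_const_right _ 2 tendsto_natCast_atTop_atTop)
        simpa using (tendsto_const_nhds (x := (1:ℝ))).sub h0
      have hlim : Filter.Tendsto (fun m : ℕ => φ (1 - 1/((m:ℝ)+2))) Filter.atTop (nhds (φ 1)) :=
        (hcont.continuousAt.tendsto).comp hseq
      have hφ1 : 0 ≤ φ 1 := by
        apply ge_of_tendsto' hlim
        intro m
        apply hφr
        · have : 1/((m:ℝ)+2) ≤ 1/2 := by
            apply div_le_div_of_nonneg_left (by norm_num) (by norm_num)
            · push_cast; linarith [Nat.cast_nonneg (α := ℝ) m]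
          linarith
        · have : 0 < 1/((m:ℝ)+2) := by positivity
          linarith
      have hφ1eq : φ 1 = ∑ i, ∑ j, c i * c j * Real.arcsin (g i j) := by
        rw [hφ]
        simp only [one_mul]
      rwa [hφ1eq] at hφ1
    -- put everything together
    rw [hquad]
    have hexp : ∑ i, ∑ j, c i * c j * M i j
        = 1/2 * (∑ i, c i) ^ 2 + (1/Real.pi) * ∑ i, ∑ j, c i * c j * Real.arcsin (g i j) := by
      have : ∀ i j, c i * c j * M i j
          = 1/2 * (c i * c j) + (1/Real.pi) * (c i * c j * Real.arcsin (g i j)) := by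
        intro i j; rw [hMg]; ring
      have hsq : (∑ i, c i)^2 = ∑ i, ∑ j, c i * c j := by rw [sq, Finset.sum_mul_sum]
      rw [hsq, Finset.mul_sum, Finset.mul_sum, ← Finset.sum_add_distrib]
      refine Finset.sum_congr rfl (fun i _ => ?_)
      rw [Finset.mul_sum, Finset.mul_sum, ← Finset.sum_add_distrib]
      refine Finset.sum_congr rfl (fun j _ => ?_)
      rw [hMg]; ring
    rw [hexp]
    have hpi : 0 < 1/Real.pi := by positivity
    have h2 : 0 ≤ (1/Real.pi) * ∑ i, ∑ j, c i * c j * Real.arcsin (g i j) :=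
      mul_nonneg hpi.le harc
    nlinarith [sq_nonneg (∑ i, c i)]
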